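/- Let P be a polynomial over K whose Newton polygon has an extremal point at abscissa d, with left slope λ₀ and right slope λ₁ (λ₀ < λ₁), normalized so NF(P)(d) = λ₀ d. Define φ(x) = NF(P)(x) for x ≤ d and φ(x) = λ₀ x for x > d, and b_φ(Q) = min_x (NF(Q)(x) − φ(x)), b₀(Q) = min_x (NF(Q)(x) − λ₀ x). Then for all nonzero polynomials Q₁, Q₂: b_φ(Q₁ Q₂) ≥ b_φ(Q₁) + b₀(Q₂). -/

import Mathlib

open Polynomial Set

noncomputable section

variable {K : Type*} [Field K]

/-- Map `WithTop ℤ` into `EReal`. -/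
def toE : WithTop ℤ → EReal := WithTop.recTopCoe ⊤ (fun n => ((n : ℝ) : EReal))

/-- Newton function of a polynomial: the largest convex function lying below the
points `(i, val aᵢ)`, realized as the sup of affine minorants. -/
def NF (v : AddValuation K (WithTop ℤ)) (P : K[X]) (x : ℝ) : EReal :=
  sSup {y : EReal | ∃ a b : ℝ,
    (∀ i : ℕ, i ≤ P.natDegree → ((a * (i : ℝ) + b : ℝ) : EReal) ≤ toE (v (P.coeff i))) ∧
    y = ((a * x + b : ℝ) : EReal)}

/-- The invariant `b_φ(Q) = min_{0 ≤ x ≤ deg Q} (NF(Q)(x) − φ(x))`. -/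
def bE (v : AddValuation K (WithTop ℤ)) (φ : ℝ → EReal) (Q : K[X]) : EReal :=
  sInf {y : EReal | ∃ x : ℝ, 0 ≤ x ∧ x ≤ (Q.natDegree : ℝ) ∧ y = NF v Q x - φ x}

/-! ### Auxiliary lemmas -/

@[simp] lemma toE_top : toE (⊤ : WithTop ℤ) = ⊤ := rfl

@[simp] lemma toE_intCast (n : ℤ) : toE (n : WithTop ℤ) = ((n : ℝ) : EReal) := rfl

lemma toE_ne_bot (x : WithTop ℤ) : toE x ≠ ⊥ := by
  induction x using WithTop.recTopCoe with
  | top => simp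
  | coe n => simp [toE]

lemma toE_mono {x y : WithTop ℤ} (h : x ≤ y) : toE x ≤ toE y := by
  induction y using WithTop.recTopCoe with
  | top => simp
  | coe n =>
    induction x using WithTop.recTopCoe with
    | top => simp at h
    | coe m =>
      have : m ≤ n := by exact_mod_cast h
      simp only [toE_intCast]
      exact_mod_cast this

lemma toE_add (x y : WithTop ℤ) : toE (x + y) = toE x + toE y := by
  induction x using WithTop.recTopCoe with
  | top =>
    rw [top_add, toE_top, EReal.top_add_of_ne_bot (toE_ne_bot y)]
  | coe m =>
    induction y using WithTop.recTopCoe with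
    | top =>
      rw [add_top, toE_top, EReal.add_top_of_ne_bot (toE_ne_bot _)]
    | coe n =>
      have : ((m : WithTop ℤ) + n) = ((m + n : ℤ) : WithTop ℤ) := by push_cast; ring
      rw [this, toE_intCast, toE_intCast, toE_intCast]
      push_cast
      ring

lemma v_ne_top (v : AddValuation K (WithTop ℤ)) {x : K} (hx : x ≠ 0) : v x ≠ ⊤ := by
  intro h
  have h1 : v x + v x⁻¹ = 0 := by
    rw [← v.map_mul, mul_inv_cancel₀ hx, v.map_one]
  rw [h, top_add] at h1
  exact (by simp : (⊤ : WithTop ℤ) ≠ 0) h1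

lemma minorant_le_NF (v : AddValuation K (WithTop ℤ)) (Q : K[X]) {a b : ℝ}
    (h : ∀ i : ℕ, i ≤ Q.natDegree → ((a * (i : ℝ) + b : ℝ) : EReal) ≤ toE (v (Q.coeff i)))
    (x : ℝ) : ((a * x + b : ℝ) : EReal) ≤ NF v Q x :=
  le_sSup ⟨a, b, h, rfl⟩

lemma NF_le_coeff (v : AddValuation K (WithTop ℤ)) (Q : K[X]) {k : ℕ} (hk : k ≤ Q.natDegree) :
    NF v Q (k : ℝ) ≤ toE (v (Q.coeff k)) := by
  apply sSup_le
  rintro y ⟨a, b, hab, rfl⟩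
  exact hab k hk

lemma ereal_cases (x : EReal) : x = ⊥ ∨ (∃ r : ℝ, x = (r : EReal)) ∨ x = ⊤ := by
  induction x using EReal.rec with
  | bot => exact Or.inl rfl
  | coe r => exact Or.inr (Or.inl ⟨r, rfl⟩)
  | top => exact Or.inr (Or.inr rfl)

lemma coe_le_of_le_toReal {x : EReal} (hx : x ≠ ⊥) {m : ℝ} (h : m ≤ x.toReal) :
    (m : EReal) ≤ x := by
  induction x using EReal.rec with
  | bot => exact absurd rfl hx
  | coe r => exact_mod_cast h
  | top => exact le_top

lemma exists_const_le_NF (v : AddValuation K (WithTop ℤ)) {Q : K[X]} (hQ : Q ≠ 0) :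
    ∃ m : ℝ, ∀ x : ℝ, ((m : ℝ) : EReal) ≤ NF v Q x := by
  classical
  set n := Q.natDegree with hn
  set g : ℕ → ℝ := fun i => (toE (v (Q.coeff i))).toReal with hg
  refine ⟨(Finset.range (n + 1)).inf' ⟨0, by simp⟩ g, fun x => ?_⟩
  set m := (Finset.range (n + 1)).inf' ⟨0, by simp⟩ g with hm
  have hconstr : ∀ i : ℕ, i ≤ Q.natDegree →
      ((0 * (i : ℝ) + m : ℝ) : EReal) ≤ toE (v (Q.coeff i)) := by
    intro i hi
    have him : m ≤ g i := Finset.inf'_le _ (Finset.mem_range.mpr (Nat.lt_succ_of_le hi))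
    have := coe_le_of_le_toReal (toE_ne_bot (v (Q.coeff i))) him
    simpa using this
  simpa using minorant_le_NF v Q hconstr x

lemma NF_interp (v : AddValuation K (WithTop ℤ)) (Q : K[X]) {u t w A B : ℝ}
    (hut : u ≤ t) (htw : t ≤ w) (huw : u < w)
    (hA : NF v Q u ≤ (A : EReal)) (hB : NF v Q w ≤ (B : EReal)) :
    NF v Q t ≤ ((((w - t) * A + (t - u) * B) / (w - u) : ℝ) : EReal) := by
  apply sSup_le
  rintro y ⟨a, b, hab, rfl⟩
  have h1 : a * u + b ≤ A := by exact_mod_cast le_trans (minorant_le_NF v Q hab u) hA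
  have h2 : a * w + b ≤ B := by exact_mod_cast le_trans (minorant_le_NF v Q hab w) hB
  rw [EReal.coe_le_coe_iff, le_div_iff₀ (by linarith)]
  nlinarith [mul_le_mul_of_nonneg_left h1 (by linarith : (0:ℝ) ≤ w - t),
             mul_le_mul_of_nonneg_left h2 (by linarith : (0:ℝ) ≤ t - u)]

lemma le_toE_v_sum (v : AddValuation K (WithTop ℤ)) {ι : Type*} (s : Finset ι) (f : ι → K)
    {C : EReal} (h : ∀ i ∈ s, C ≤ toE (v (f i))) : C ≤ toE (v (∑ i ∈ s, f i)) := by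
  classical
  induction s using Finset.induction_on with
  | empty => simp
  | @insert a s ha ih =>
    rw [Finset.sum_insert ha]
    have hmin := toE_mono (v.map_add (f a) (∑ i ∈ s, f i))
    refine le_trans ?_ hmin
    rcases min_cases (v (f a)) (v (∑ i ∈ s, f i)) with ⟨he, _⟩ | ⟨he, _⟩ <;> rw [he]
    · exact h a (Finset.mem_insert_self a s)
    · exact ih (fun i hi => h i (Finset.mem_insert_of_mem hi))

/-- The extended function φ. -/
def phiF (v : AddValuation K (WithTop ℤ)) (P : K[X]) (d : ℕ) (lam0 : ℝ) : ℝ → EReal :=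
  fun x => if x ≤ (d : ℝ) then NF v P x else ((lam0 * x : ℝ) : EReal)

lemma phiF_of_le (v : AddValuation K (WithTop ℤ)) (P : K[X]) (d : ℕ) (lam0 : ℝ) {x : ℝ}
    (h : x ≤ (d : ℝ)) : phiF v P d lam0 x = NF v P x := if_pos h

lemma phiF_of_lt (v : AddValuation K (WithTop ℤ)) (P : K[X]) (d : ℕ) (lam0 : ℝ) {x : ℝ}
    (h : (d : ℝ) < x) : phiF v P d lam0 x = ((lam0 * x : ℝ) : EReal) := if_neg (not_le.2 h)

lemma phiF_ne_bot (v : AddValuation K (WithTop ℤ)) {P : K[X]} (hP : P ≠ 0) (d : ℕ) (lam0 : ℝ)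
    (x : ℝ) : phiF v P d lam0 x ≠ ⊥ := by
  obtain ⟨m, hm⟩ := exists_const_le_NF v hP
  rcases le_or_gt x (d : ℝ) with h | h
  · rw [phiF_of_le v P d lam0 h]
    exact fun hb => by simpa [hb] using hm x
  · rw [phiF_of_lt v P d lam0 h]
    exact EReal.coe_ne_bot _

/-- Lemma A : `NF P i ≥ lam0 * i` at natural points `i ≤ d`. -/
lemma lemA (v : AddValuation K (WithTop ℤ)) (P : K[X]) (d : ℕ) (lam0 : ℝ)
    (hnorm : NF v P (d : ℝ) = ((lam0 * d : ℝ) : EReal))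
    (hleft : NF v P ((d : ℝ) - 1) = ((lam0 * ((d : ℝ) - 1) : ℝ) : EReal))
    (i : ℕ) (hid : (i : ℝ) ≤ (d : ℝ)) :
    ((lam0 * i : ℝ) : EReal) ≤ NF v P (i : ℝ) := by
  rcases eq_or_lt_of_le hid with heq | hlt
  · rw [heq, hnorm]
  · by_contra hcon
    have hlt' : NF v P (i : ℝ) < ((lam0 * i : ℝ) : EReal) := not_le.1 hcon
    obtain ⟨A, hA1, hA2⟩ := EReal.exists_between_coe_real hlt'
    have hid' : i < d := by exact_mod_cast hlt
    have hid1 : (i : ℝ) ≤ (d : ℝ) - 1 := by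
      have : (i : ℝ) + 1 ≤ d := by exact_mod_cast hid'
      linarith
    have hint := NF_interp v P (u := (i : ℝ)) (t := (d : ℝ) - 1) (w := (d : ℝ))
      (A := A) (B := lam0 * d) hid1 (by linarith) hlt hA1.le (le_of_eq hnorm)
    rw [hleft, EReal.coe_le_coe_iff, le_div_iff₀ (by linarith : (0:ℝ) < (d:ℝ) - i)] at hint
    have hA2' : A < lam0 * i := by exact_mod_cast hA2
    nlinarith

/-- Interpolation property of φ between natural points. -/
lemma phiF_interp (v : AddValuation K (WithTop ℤ)) (P : K[X]) (hP : P ≠ 0) (d : ℕ) (lam0 : ℝ)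
    (hnorm : NF v P (d : ℝ) = ((lam0 * d : ℝ) : EReal))
    (hleft : NF v P ((d : ℝ) - 1) = ((lam0 * ((d : ℝ) - 1) : ℝ) : EReal))
    (u w : ℕ) (t : ℝ) (hut : (u : ℝ) ≤ t) (htw : t ≤ (w : ℝ)) (huw : (u : ℝ) < (w : ℝ))
    {A B : ℝ} (hA : phiF v P d lam0 (u : ℝ) ≤ (A : EReal))
    (hB : phiF v P d lam0 (w : ℝ) ≤ (B : EReal)) :
    phiF v P d lam0 t ≤ (((((w : ℝ) - t) * A + (t - (u : ℝ)) * B) / ((w : ℝ) - (u : ℝ)) : ℝ) : EReal) := by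
  have hAu : lam0 * u ≤ A := by
    rcases le_or_gt (u : ℝ) (d : ℝ) with h | h
    · have h1 := lemA v P d lam0 hnorm hleft u h
      have h2 : NF v P (u : ℝ) ≤ (A : EReal) := by
        rwa [phiF_of_le v P d lam0 h] at hA
      exact_mod_cast le_trans h1 h2
    · have h2 : ((lam0 * (u:ℝ) : ℝ) : EReal) ≤ (A : EReal) := by
        rwa [phiF_of_lt v P d lam0 h] at hA
      exact_mod_cast h2
  by_cases hwd : (w : ℝ) ≤ (d : ℝ)
  · -- everything in the NF region
    have hud : (u : ℝ) ≤ d := le_trans (le_trans hut htw) hwd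
    have htd : t ≤ (d : ℝ) := le_trans htw hwd
    have hA' : NF v P (u : ℝ) ≤ (A : EReal) := by rwa [phiF_of_le v P d lam0 hud] at hA
    have hB' : NF v P (w : ℝ) ≤ (B : EReal) := by rwa [phiF_of_le v P d lam0 hwd] at hB
    have := NF_interp v P hut htw huw hA' hB'
    rwa [phiF_of_le v P d lam0 htd]
  · push_neg at hwd
    have hBw : lam0 * w ≤ B := by
      have h2 : ((lam0 * (w:ℝ) : ℝ) : EReal) ≤ (B : EReal) := by
        rwa [phiF_of_lt v P d lam0 hwd] at hB
      exact_mod_cast h2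
    by_cases htd : t ≤ (d : ℝ)
    · -- u ≤ t ≤ d < w
      have hud : (u : ℝ) ≤ (d : ℝ) := le_trans hut htd
      rcases eq_or_lt_of_le hud with hudeq | hudlt
      · -- u = d, hence t = d
        have ht' : t = (d : ℝ) := le_antisymm htd (hudeq ▸ hut)
        have hphit : phiF v P d lam0 t = ((lam0 * d : ℝ) : EReal) := by
          rw [ht', phiF_of_le v P d lam0 le_rfl, hnorm]
        rw [hphit, EReal.coe_le_coe_iff, le_div_iff₀ (by linarith)]
        have hAd : lam0 * d ≤ A := by rw [← hudeq]; exact hAu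
        have h2 : t = (u:ℝ) := by rw [ht', ← hudeq]
        subst h2
        nlinarith [mul_le_mul_of_nonneg_left hAd (by linarith : (0:ℝ) ≤ (w:ℝ) - (u:ℝ))]
      · -- u < d
        have hA' : NF v P (u : ℝ) ≤ (A : EReal) := by rwa [phiF_of_le v P d lam0 hud] at hA
        have h1 : NF v P t ≤ (((((d : ℝ) - t) * A + (t - (u : ℝ)) * (lam0 * d)) / ((d : ℝ) - (u : ℝ)) : ℝ) : EReal) :=
          NF_interp v P hut htd hudlt hA' (le_of_eq hnorm)
        have hphit : phiF v P d lam0 t = NF v P t := phiF_of_le v P d lam0 htd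
        rw [hphit]
        refine le_trans h1 ?_
        rw [EReal.coe_le_coe_iff, div_le_div_iff₀ (by linarith) (by linarith)]
        nlinarith [mul_nonneg (mul_nonneg (by linarith : (0:ℝ) ≤ (w:ℝ) - d) (by linarith : (0:ℝ) ≤ t - u)) (by linarith : (0:ℝ) ≤ A - lam0 * u),
          mul_nonneg (mul_nonneg (by linarith : (0:ℝ) ≤ t - u) (by linarith : (0:ℝ) ≤ (d:ℝ) - u)) (by linarith : (0:ℝ) ≤ B - lam0 * w)]
    · -- d < t : φ is linear at t
      push_neg at htd
      have hphit : phiF v P d lam0 t = ((lam0 * t : ℝ) : EReal) := phiF_of_lt v P d lam0 htd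
      rw [hphit, EReal.coe_le_coe_iff, le_div_iff₀ (by linarith)]
      nlinarith [mul_le_mul_of_nonneg_left hAu (by linarith : (0:ℝ) ≤ (w:ℝ) - t),
        mul_le_mul_of_nonneg_left hBw (by linarith : (0:ℝ) ≤ t - (u:ℝ))]

/-- Cone property of φ at natural points : φ(k) ≤ φ(i) + lam0 * (k - i). -/
lemma phiF_cone (v : AddValuation K (WithTop ℤ)) (P : K[X]) (hP : P ≠ 0) (d : ℕ) (lam0 : ℝ)
    (hnorm : NF v P (d : ℝ) = ((lam0 * d : ℝ) : EReal))
    (hleft : NF v P ((d : ℝ) - 1) = ((lam0 * ((d : ℝ) - 1) : ℝ) : EReal))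
    (i k : ℕ) (hik : i ≤ k) :
    phiF v P d lam0 (k : ℝ) ≤ phiF v P d lam0 (i : ℝ) + ((lam0 * ((k : ℝ) - (i : ℝ)) : ℝ) : EReal) := by
  rcases ereal_cases (phiF v P d lam0 (i : ℝ)) with hphi | ⟨A, hphi⟩ | hphi
  · exact absurd hphi (phiF_ne_bot v hP d lam0 _)
  case inr.inr =>
    rw [hphi, EReal.top_add_coe]
    exact le_top
  case inr.inl =>
    rw [hphi]
    rcases eq_or_lt_of_le hik with heq | hlt
    · subst heq
      rw [hphi, show lam0 * ((i:ℝ) - (i:ℝ)) = 0 from by ring, EReal.coe_zero, add_zero]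
    · have hik' : (i : ℝ) < (k : ℝ) := by exact_mod_cast hlt
      rw [← EReal.coe_add]
      by_cases hkd : (k : ℝ) ≤ (d : ℝ)
      · -- NF region
        have hid : (i : ℝ) ≤ (d : ℝ) := le_trans hik'.le hkd
        have hidlt : (i : ℝ) < (d : ℝ) := lt_of_lt_of_le hik' hkd
        have hAi : lam0 * i ≤ A := by
          have h1 := lemA v P d lam0 hnorm hleft i hid
          rw [show NF v P (i : ℝ) = phiF v P d lam0 (i:ℝ) from (phiF_of_le v P d lam0 hid).symm, hphi] at h1
          exact_mod_cast h1
        have hA' : NF v P (i : ℝ) ≤ (A : EReal) := by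
          rw [show NF v P (i : ℝ) = phiF v P d lam0 (i:ℝ) from (phiF_of_le v P d lam0 hid).symm, hphi]
        have h1 := NF_interp v P (u := (i:ℝ)) (t := (k:ℝ)) (w := (d:ℝ)) (A := A)
          (B := lam0 * d) hik'.le hkd hidlt hA' (le_of_eq hnorm)
        have hphik : phiF v P d lam0 (k : ℝ) = NF v P (k : ℝ) := phiF_of_le v P d lam0 hkd
        rw [hphik]
        refine le_trans h1 ?_
        rw [EReal.coe_le_coe_iff, div_le_iff₀ (by linarith)]
        nlinarith [mul_nonneg (by linarith : (0:ℝ) ≤ (k:ℝ) - i) (by linarith : (0:ℝ) ≤ A - lam0 * i)]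
      · push_neg at hkd
        have hphik : phiF v P d lam0 (k : ℝ) = ((lam0 * (k:ℝ) : ℝ) : EReal) := phiF_of_lt v P d lam0 hkd
        rw [hphik, EReal.coe_le_coe_iff]
        have hAi : lam0 * i ≤ A := by
          rcases le_or_gt (i : ℝ) (d : ℝ) with h | h
          · have h1 := lemA v P d lam0 hnorm hleft i h
            rw [show NF v P (i : ℝ) = phiF v P d lam0 (i:ℝ) from (phiF_of_le v P d lam0 h).symm, hphi] at h1
            exact_mod_cast h1
          · have h3 : phiF v P d lam0 (i : ℝ) = ((lam0 * (i:ℝ) : ℝ) : EReal) := phiF_of_lt v P d lam0 h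
            rw [h3] at hphi
            exact le_of_eq (by exact_mod_cast hphi)
        linarith

/-- with `φ = NF(P)` on `[0,d]` extended by slope `λ₀` beyond `d`
(`P` normalized so that `NF(P)(d) = λ₀ d`), one has `b_φ(Q₁Q₂) ≥ b_φ(Q₁) + b₀(Q₂)`. -/
theorem stmt6 (v : AddValuation K (WithTop ℤ)) (P : K[X]) (hP : P ≠ 0)
    (d : ℕ) (hdn : d ≤ P.natDegree)
    (lam0 lam1 : ℝ) (hlt : lam0 < lam1)
    (hnorm : NF v P (d : ℝ) = ((lam0 * d : ℝ) : EReal))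
    (hleft : NF v P ((d : ℝ) - 1) = ((lam0 * ((d : ℝ) - 1) : ℝ) : EReal))
    (hright : NF v P ((d : ℝ) + 1) = ((lam0 * d + lam1 : ℝ) : EReal))
    (Q₁ Q₂ : K[X]) (h1 : Q₁ ≠ 0) (h2 : Q₂ ≠ 0) :
    bE v (fun x => if x ≤ (d : ℝ) then NF v P x else ((lam0 * x : ℝ) : EReal)) Q₁
      + bE v (fun x => ((lam0 * x : ℝ) : EReal)) Q₂
      ≤ bE v (fun x => if x ≤ (d : ℝ) then NF v P x else ((lam0 * x : ℝ) : EReal))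
          (Q₁ * Q₂) := by
  classical
  show bE v (phiF v P d lam0) Q₁ + bE v (fun x => ((lam0 * x : ℝ) : EReal)) Q₂
      ≤ bE v (phiF v P d lam0) (Q₁ * Q₂)
  set φ := phiF v P d lam0 with hφdef
  set n₁ := Q₁.natDegree with hn₁
  set n₂ := Q₂.natDegree with hn₂
  set N := (Q₁ * Q₂).natDegree with hNdef
  have hN : N = n₁ + n₂ := natDegree_mul h1 h2
  by_cases hb1bot : bE v φ Q₁ = ⊥
  · rw [hb1bot, EReal.bot_add]; exact bot_le
  by_cases hb2bot : bE v (fun x => ((lam0 * x : ℝ) : EReal)) Q₂ = ⊥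
  · rw [hb2bot, EReal.add_bot]; exact bot_le
  -- the two invariants are finite
  have hNFdeg : ∀ (Q : K[X]), Q ≠ 0 → ∃ r : ℝ, NF v Q (Q.natDegree : ℝ) ≤ (r : EReal) := by
    intro Q hQ
    have hne := v_ne_top v (mt leadingCoeff_eq_zero.1 hQ : Q.leadingCoeff ≠ 0)
    obtain ⟨z, hz⟩ := WithTop.ne_top_iff_exists.1 hne
    refine ⟨(z : ℝ), ?_⟩
    have := NF_le_coeff v Q (le_refl Q.natDegree)
    rwa [show v (Q.coeff Q.natDegree) = (z : WithTop ℤ) from hz.symm, toE_intCast] at this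
  have hb1top : bE v φ Q₁ ≠ ⊤ := by
    obtain ⟨r, hr⟩ := hNFdeg Q₁ h1
    have hmem : (NF v Q₁ (n₁ : ℝ) - φ (n₁ : ℝ)) ∈
        {y : EReal | ∃ x : ℝ, 0 ≤ x ∧ x ≤ (n₁ : ℝ) ∧ y = NF v Q₁ x - φ x} :=
      ⟨(n₁ : ℝ), by positivity, le_refl _, rfl⟩
    have hle : bE v φ Q₁ ≤ NF v Q₁ (n₁ : ℝ) - φ (n₁ : ℝ) := sInf_le hmem
    intro htop
    rw [htop, top_le_iff] at hle
    rcases ereal_cases (φ (n₁ : ℝ)) with hphi | ⟨c, hphi⟩ | hphi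
    · exact phiF_ne_bot v hP d lam0 _ hphi
    case inr.inr => rw [hphi, EReal.sub_top] at hle; exact absurd hle (by simp)
    case inr.inl =>
      rw [hphi] at hle
      have h2 : NF v Q₁ (n₁ : ℝ) - ((c : ℝ) : EReal) ≤ (r : EReal) - ((c : ℝ) : EReal) :=
        EReal.sub_le_sub hr (le_refl _)
      rw [hle, top_le_iff, ← EReal.coe_sub] at h2
      exact EReal.coe_ne_top _ h2
  have hb2top : bE v (fun x => ((lam0 * x : ℝ) : EReal)) Q₂ ≠ ⊤ := by
    obtain ⟨r, hr⟩ := hNFdeg Q₂ h2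
    have hle : bE v (fun x => ((lam0 * x : ℝ) : EReal)) Q₂ ≤
        NF v Q₂ (n₂ : ℝ) - ((lam0 * (n₂:ℝ) : ℝ) : EReal) :=
      sInf_le ⟨(n₂ : ℝ), by positivity, le_refl _, rfl⟩
    intro htop
    rw [htop, top_le_iff] at hle
    have h2 : NF v Q₂ (n₂ : ℝ) - ((lam0 * (n₂:ℝ) : ℝ) : EReal) ≤
        (r : EReal) - ((lam0 * (n₂:ℝ) : ℝ) : EReal) :=
      EReal.sub_le_sub hr (le_refl _)
    rw [hle, top_le_iff, ← EReal.coe_sub] at h2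
    exact EReal.coe_ne_top _ h2
  obtain ⟨b₁, hb₁⟩ : ∃ r : ℝ, bE v φ Q₁ = (r : EReal) := by
    rcases ereal_cases (bE v φ Q₁) with h | h | h
    · exact absurd h hb1bot
    · exact h
    · exact absurd h hb1top
  obtain ⟨b₂, hb₂⟩ : ∃ r : ℝ, bE v (fun x => ((lam0 * x : ℝ) : EReal)) Q₂ = (r : EReal) := by
    rcases ereal_cases (bE v (fun x => ((lam0 * x : ℝ) : EReal)) Q₂) with h | h | h
    · exact absurd h hb2bot
    · exact h
    · exact absurd h hb2top
  -- φ takes real values on [0, N]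
  have hφreal : ∀ t : ℝ, 0 ≤ t → t ≤ (N : ℝ) → ∃ r : ℝ, φ t = (r : EReal) := by
    intro t ht0 htN
    have hne_top : φ t ≠ ⊤ := by
      rcases le_or_gt t (n₁ : ℝ) with h | h
      · intro htop
        have hle : bE v φ Q₁ ≤ NF v Q₁ t - φ t := sInf_le ⟨t, ht0, h, rfl⟩
        rw [htop, EReal.sub_top, hb₁, le_bot_iff] at hle
        exact (by simp : ((b₁ : ℝ) : EReal) ≠ ⊥) hle
      · rcases le_or_gt t (d : ℝ) with htd | htd
        · -- n₁ < t ≤ d : interpolate between n₁ and d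
          have hphin₁ : φ (n₁ : ℝ) ≠ ⊤ := by
            intro htop
            have hle : bE v φ Q₁ ≤ NF v Q₁ (n₁:ℝ) - φ (n₁:ℝ) :=
              sInf_le ⟨(n₁:ℝ), by positivity, le_refl _, rfl⟩
            rw [htop, EReal.sub_top, hb₁, le_bot_iff] at hle
            exact (by simp : ((b₁ : ℝ) : EReal) ≠ ⊥) hle
          obtain ⟨A, hA⟩ : ∃ r : ℝ, φ (n₁ : ℝ) = (r : EReal) := by
            rcases ereal_cases (φ (n₁ : ℝ)) with h' | h' | h'
            · exact absurd h' (phiF_ne_bot v hP d lam0 _)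
            · exact h'
            · exact absurd h' hphin₁
          have hn₁d : (n₁ : ℝ) < (d : ℝ) := lt_of_lt_of_le h htd
          have hint := phiF_interp v P hP d lam0 hnorm hleft n₁ d t h.le htd hn₁d
            (A := A) (B := lam0 * d) (le_of_eq hA)
            (by rw [phiF_of_le v P d lam0 (le_refl (d:ℝ)), hnorm])
          rw [← hφdef] at hint
          intro htop
          rw [htop, top_le_iff] at hint
          exact EReal.coe_ne_top _ hint
        · rw [hφdef, phiF_of_lt v P d lam0 htd]
          exact EReal.coe_ne_top _
      -- done ne_top
    rcases ereal_cases (φ t) with h' | h' | h'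
    · exact absurd h' (phiF_ne_bot v hP d lam0 _)
    · exact h'
    · exact absurd h' hne_top
  -- Point bound F1
  have hF1 : ∀ k : ℕ, k ≤ N → ∀ pk : ℝ, φ (k : ℝ) = (pk : EReal) →
      ((pk + b₁ + b₂ : ℝ) : EReal) ≤ toE (v ((Q₁ * Q₂).coeff k)) := by
    intro k hk pk hpk
    rw [coeff_mul]
    apply le_toE_v_sum
    rintro ⟨i, j⟩ hij
    rw [Finset.HasAntidiagonal.mem_antidiagonal] at hij
    by_cases hi : n₁ < i
    · rw [coeff_eq_zero_of_natDegree_lt hi, zero_mul, v.map_zero, toE_top]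
      exact le_top
    by_cases hj : n₂ < j
    · rw [coeff_eq_zero_of_natDegree_lt hj, mul_zero, v.map_zero, toE_top]
      exact le_top
    push_neg at hi hj
    -- real value of φ at i
    obtain ⟨pi, hpi⟩ : ∃ r : ℝ, φ (i : ℝ) = (r : EReal) := by
      apply hφreal _ (by positivity)
      have : i ≤ N := le_trans hi (by omega)
      exact_mod_cast this
    have hmem1 : bE v φ Q₁ ≤ NF v Q₁ (i : ℝ) - φ (i : ℝ) :=
      sInf_le ⟨(i : ℝ), by positivity, by exact_mod_cast hi, rfl⟩
    have h1E : ((pi + b₁ : ℝ) : EReal) ≤ toE (v (Q₁.coeff i)) := by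
      rw [hb₁, hpi] at hmem1
      have := add_le_add_left hmem1 ((pi : ℝ) : EReal)
      rw [EReal.sub_add_cancel] at this
      refine le_trans ?_ (le_trans this (NF_le_coeff v Q₁ hi))
      rw [← EReal.coe_add]
      exact le_of_eq (by norm_num [add_comm])
    have hmem2 : bE v (fun x => ((lam0 * x : ℝ) : EReal)) Q₂ ≤
        NF v Q₂ (j : ℝ) - ((lam0 * (j:ℝ) : ℝ) : EReal) :=
      sInf_le ⟨(j : ℝ), by positivity, by exact_mod_cast hj, rfl⟩
    have h2E : ((lam0 * (j:ℝ) + b₂ : ℝ) : EReal) ≤ toE (v (Q₂.coeff j)) := by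
      rw [hb₂] at hmem2
      have := add_le_add_left hmem2 ((lam0 * (j:ℝ) : ℝ) : EReal)
      rw [EReal.sub_add_cancel] at this
      refine le_trans ?_ (le_trans this (NF_le_coeff v Q₂ hj))
      rw [← EReal.coe_add]
      exact le_of_eq (by norm_num [add_comm])
    -- cone inequality
    have hcone := phiF_cone v P hP d lam0 hnorm hleft i k (by omega)
    rw [← hφdef, hpk, hpi, ← EReal.coe_add] at hcone
    have hconeR : pk ≤ pi + lam0 * ((k:ℝ) - (i:ℝ)) := by exact_mod_cast hcone
    have hkij : (k : ℝ) - (i : ℝ) = (j : ℝ) := by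
      have : i + j = k := hij
      push_cast [← this]; ring
    rw [hkij] at hconeR
    rw [v.map_mul, toE_add]
    calc ((pk + b₁ + b₂ : ℝ) : EReal) ≤ (((pi + b₁) + (lam0 * (j:ℝ) + b₂) : ℝ) : EReal) := by
          rw [EReal.coe_le_coe_iff]; linarith
    _ = ((pi + b₁ : ℝ) : EReal) + ((lam0 * (j:ℝ) + b₂ : ℝ) : EReal) := by
          rw [← EReal.coe_add]
    _ ≤ toE (v (Q₁.coeff i)) + toE (v (Q₂.coeff j)) := add_le_add h1E h2E
  -- Main estimate
  rw [hb₁, hb₂]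
  apply le_sInf
  rintro y ⟨x, hx0, hxN, rfl⟩
  rw [← hNdef] at hxN
  obtain ⟨px, hpx⟩ := hφreal x hx0 hxN
  -- Claim : the product Newton function is at least px + b₁ + b₂ at x
  have claim : ((px + b₁ + b₂ : ℝ) : EReal) ≤ NF v (Q₁ * Q₂) x := by
    by_cases hN0 : N = 0
    · have hx00 : x = 0 := le_antisymm (by rw [hN0] at hxN; exact_mod_cast hxN) hx0
      have h := minorant_le_NF v (Q₁ * Q₂) (a := 0) (b := px + b₁ + b₂) (fun i hi => ?_) x
      · simpa using h
      · have hi0 : i = 0 := by omega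
        subst hi0
        have : φ ((0:ℕ) : ℝ) = (px : EReal) := by rw [Nat.cast_zero, ← hx00, hpx]
        have hF := hF1 0 (Nat.zero_le _) px this
        simpa using hF
    · -- N ≥ 1 : chord construction
      have hN1 : 1 ≤ N := Nat.one_le_iff_ne_zero.mpr hN0
      set k₀ : ℕ := min ⌊x⌋₊ (N - 1) with hk₀def
      set k₁ : ℕ := k₀ + 1 with hk₁def
      have hk₁N : k₁ ≤ N := by
        have : k₀ ≤ N - 1 := min_le_right _ _
        omega
      have hk₀x : (k₀ : ℝ) ≤ x := by
        have h1 : (k₀ : ℝ) ≤ (⌊x⌋₊ : ℝ) := by exact_mod_cast min_le_left ⌊x⌋₊ (N-1)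
        exact le_trans h1 (Nat.floor_le hx0)
      have hxk₁ : x ≤ (k₁ : ℝ) := by
        rcases le_or_gt ⌊x⌋₊ (N - 1) with h | h
        · have : k₀ = ⌊x⌋₊ := min_eq_left h
          rw [hk₁def, this]
          push_cast
          exact (Nat.lt_floor_add_one x).le
        · have hk : k₀ = N - 1 := min_eq_right h.le
          have : k₁ = N := by omega
          rw [this]
          exact hxN
      obtain ⟨p₀, hp₀⟩ := hφreal (k₀ : ℝ) (by positivity) (by exact_mod_cast (by omega : k₀ ≤ N))
      obtain ⟨p₁, hp₁⟩ := hφreal (k₁ : ℝ) (by positivity) (by exact_mod_cast hk₁N)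
      set a : ℝ := p₁ - p₀ with hadef
      set c : ℝ := p₀ - a * k₀ + b₁ + b₂ with hcdef
      have hconstr : ∀ i : ℕ, i ≤ (Q₁ * Q₂).natDegree →
          ((a * (i : ℝ) + c : ℝ) : EReal) ≤ toE (v ((Q₁ * Q₂).coeff i)) := by
        intro i hiN
        obtain ⟨pi, hpi⟩ := hφreal (i : ℝ) (by positivity) (by exact_mod_cast hiN)
        have hFi := hF1 i hiN pi hpi
        refine le_trans ?_ hFi
        rw [EReal.coe_le_coe_iff]
        -- suffices : a * (i - k₀) + p₀ ≤ pi
        have key : a * ((i : ℝ) - (k₀ : ℝ)) + p₀ ≤ pi := by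
          rcases lt_trichotomy i k₀ with hik | hik | hik
          · -- i < k₀ : interpolate φ(k₀) between i and k₁
            have hint := phiF_interp v P hP d lam0 hnorm hleft i k₁ (k₀ : ℝ)
              (by exact_mod_cast hik.le) (by exact_mod_cast (by omega : k₀ ≤ k₁))
              (by exact_mod_cast (by omega : i < k₁)) (A := pi) (B := p₁)
              (le_of_eq hpi) (le_of_eq hp₁)
            have hik₁ : (i : ℝ) < (k₁ : ℝ) := by exact_mod_cast (by omega : i < k₁)
            rw [← hφdef, hp₀, EReal.coe_le_coe_iff,
              le_div_iff₀ (by linarith : (0:ℝ) < (k₁:ℝ) - (i:ℝ))] at hint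
            have hik' : (i : ℝ) < (k₀ : ℝ) := by exact_mod_cast hik
            have hk₀k₁ : (k₁ : ℝ) = (k₀ : ℝ) + 1 := by rw [hk₁def]; push_cast; ring
            rw [hk₀k₁] at hint
            rw [hadef]
            nlinarith [hint]
          · have hpp : pi = p₀ := by
              have h3 : (pi : EReal) = (p₀ : EReal) := by rw [← hpi, hik, hp₀]
              exact_mod_cast h3
            rw [hik]
            nlinarith [hpp]
          · rcases eq_or_lt_of_le (by omega : k₁ ≤ i) with hik1 | hik1
            · subst hik1
              have hk₀k₁ : (k₁ : ℝ) = (k₀ : ℝ) + 1 := by rw [hk₁def]; push_cast; ring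
              have hpp : pi = p₁ := by
                have : (pi : EReal) = (p₁ : EReal) := by rw [← hpi, hp₁]
                exact_mod_cast this
              rw [hpp, hadef, hk₀k₁]
              ring_nf
              exact le_refl _
            · -- k₁ < i
              have hint := phiF_interp v P hP d lam0 hnorm hleft k₀ i (k₁ : ℝ)
                (by exact_mod_cast (by omega : k₀ ≤ k₁)) (by exact_mod_cast hik1.le)
                (by exact_mod_cast (by omega : k₀ < i)) (A := p₀) (B := pi)
                (le_of_eq hp₀) (le_of_eq hpi)
              rw [← hφdef, hp₁, EReal.coe_le_coe_iff] at hint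
              have hik' : (k₁ : ℝ) < (i : ℝ) := by exact_mod_cast hik1
              have hk₀i : (k₀ : ℝ) < (i : ℝ) := by
                have : k₀ < i := by omega
                exact_mod_cast this
              rw [le_div_iff₀ (by linarith)] at hint
              have hk₀k₁ : (k₁ : ℝ) = (k₀ : ℝ) + 1 := by rw [hk₁def]; push_cast; ring
              rw [hk₀k₁] at hint
              rw [hadef]
              nlinarith [hint]
        linarith
      have hval := minorant_le_NF v (Q₁ * Q₂) hconstr x
      refine le_trans ?_ hval
      rw [EReal.coe_le_coe_iff]
      -- px ≤ a * (x - k₀) + p₀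
      rcases eq_or_lt_of_le hk₀x with hxk | hxk
      · -- x = k₀
        have hpp : px = p₀ := by
          rw [hxk] at hp₀
          rw [hpx] at hp₀
          exact_mod_cast hp₀
        rw [hpp, hcdef, ← hxk]
        have h4 : a * (k₀:ℝ) = a * (k₀:ℝ) := rfl
        linarith [h4]
      · have hint := phiF_interp v P hP d lam0 hnorm hleft k₀ k₁ x hk₀x hxk₁
          (by exact_mod_cast (by omega : k₀ < k₁)) (A := p₀) (B := p₁)
          (le_of_eq hp₀) (le_of_eq hp₁)
        rw [← hφdef, hpx, EReal.coe_le_coe_iff] at hint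
        have hk₀k₁ : (k₁ : ℝ) = (k₀ : ℝ) + 1 := by rw [hk₁def]; push_cast; ring
        rw [hk₀k₁] at hint
        have hd1 : ((k₀:ℝ) + 1 - (k₀:ℝ)) = 1 := by ring
        rw [hd1, div_one] at hint
        rw [hcdef, hadef]
        nlinarith [hint]
  rw [hpx]
  calc ((b₁ : ℝ) : EReal) + (b₂ : ℝ) = ((px + b₁ + b₂ : ℝ) : EReal) - ((px : ℝ) : EReal) := by
        rw [← EReal.coe_add, ← EReal.coe_sub,
          show px + b₁ + b₂ - px = b₁ + b₂ from by ring]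
  _ ≤ NF v (Q₁ * Q₂) x - ((px : ℝ) : EReal) := EReal.sub_le_sub claim (le_refl _)
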